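/- Let p, q be coprime positive integers with q ≥ 2, σ ∈ ℝ, α = 2πp/q, and define T(z) = e^{iα}(z + σ + 1) for Im(z) > 0 and T(z) = e^{iα}(z + σ − 1) for Im(z) ≤ 0. Then for every z ∈ ℂ there exist signs ε₀, …, ε_{q−1} ∈ {−1, +1} such that T^q(z) = z + Σ_{k=0}^{q−1} ε_k e^{i(q−k)α}. In particular |T^q(z) − z| ≤ q for all z. -/

import Mathlib

theorem stmt5 (p q : ℕ) (hp : 0 < p) (hq : 2 ≤ q) (hpq : Nat.Coprime p q)
    (σ : ℝ) (z : ℂ) :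
    let α : ℝ := 2 * Real.pi * p / q
    let e : ℂ := Complex.exp ((α : ℂ) * Complex.I)
    let T : ℂ → ℂ := fun w => if 0 < w.im then e * (w + σ + 1) else e * (w + σ - 1)
    (∃ ε : Fin q → ℝ, (∀ k, ε k = 1 ∨ ε k = -1) ∧
      T^[q] z = z + ∑ k : Fin q,
        (ε k : ℂ) * Complex.exp (((q - k.val : ℕ) : ℂ) * (α : ℂ) * Complex.I)) ∧
    ‖T^[q] z - z‖ ≤ q := by
  intro α e T
  have hq0 : (q : ℝ) ≠ 0 := by positivity
  set ε' : ℕ → ℝ := fun k => if 0 < (T^[k] z).im then 1 else -1 with hε'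
  have hsign : ∀ k, ε' k = 1 ∨ ε' k = -1 := by
    intro k; simp only [hε']; split <;> simp
  -- iteration formula
  have hiter : ∀ n, T^[n] z =
      e ^ n * z + ∑ k ∈ Finset.range n, e ^ (n - k) * (σ + ε' k) := by
    intro n
    induction n with
    | zero => simp
    | succ n ih =>
      rw [Function.iterate_succ_apply']
      have hcast : (if 0 < (T^[n] z).im then (1:ℂ) else -1) = ((ε' n : ℝ) : ℂ) := by
        simp only [hε']
        rw [apply_ite (Complex.ofReal)]
        norm_num
      have hT : ∀ w : ℂ, T w = e * (w + σ + (if 0 < w.im then (1:ℂ) else -1)) := by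
        intro w
        simp only [T]
        split <;> ring
      rw [hT, hcast, ih, Finset.sum_range_succ]
      have hsum : e * ∑ k ∈ Finset.range n, e ^ (n - k) * (σ + ε' k)
          = ∑ k ∈ Finset.range n, e ^ (n + 1 - k) * (σ + ε' k) := by
        rw [Finset.mul_sum]
        refine Finset.sum_congr rfl fun k hk => ?_
        have hk' : k ≤ n := Nat.le_of_lt_succ (Nat.lt_succ_of_lt (Finset.mem_range.mp hk))
        have : n + 1 - k = (n - k) + 1 := by omega
        rw [this, pow_succ]
        ring
      have hnn : n + 1 - n = 1 := by omega
      rw [hnn, ← hsum, pow_succ, pow_one]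
      ring
  -- e^q = 1
  have hqα : (q : ℂ) * (α : ℂ) = 2 * Real.pi * p := by
    have hr : (q : ℝ) * α = 2 * Real.pi * p := by
      simp only [α]; field_simp
    calc (q : ℂ) * (α : ℂ) = (((q : ℝ) * α : ℝ) : ℂ) := by push_cast; ring
      _ = _ := by rw [hr]; push_cast; ring
  have heq : e ^ q = 1 := by
    rw [← Complex.exp_nat_mul]
    have : (q : ℂ) * ((α : ℂ) * Complex.I) = (p : ℂ) * (2 * Real.pi * Complex.I) := by
      rw [← mul_assoc, hqα]; push_cast; ring
    rw [this, Complex.exp_nat_mul, Complex.exp_two_pi_mul_I, one_pow]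
  -- e ≠ 1
  have hne1 : e ≠ 1 := by
    intro h
    rw [Complex.exp_eq_one_iff] at h
    obtain ⟨n, hn⟩ := h
    have hI : (Complex.I : ℂ) ≠ 0 := Complex.I_ne_zero
    have hα : (α : ℂ) = n * (2 * Real.pi) := by
      have h2 : (α : ℂ) * Complex.I = ((n : ℂ) * (2 * Real.pi)) * Complex.I := by
        rw [hn]; ring
      exact mul_right_cancel₀ hI h2
    have hαr : α = (n : ℝ) * (2 * Real.pi) := by
      exact_mod_cast hα
    have hpi : (0:ℝ) < 2 * Real.pi := by positivity
    have hα2 : (2 * Real.pi * p / q : ℝ) = (n : ℝ) * (2 * Real.pi) := hαr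
    have hα3 : 2 * Real.pi * (p : ℝ) = (n : ℝ) * (2 * Real.pi) * q := by
      field_simp at hα2
      linear_combination (2 * Real.pi) * hα2
    have h4 : (2 * Real.pi) * ((p : ℝ) - (n : ℝ) * q) = 0 := by linear_combination hα3
    have h5 : (p : ℝ) = (n : ℝ) * q := by
      rcases mul_eq_zero.mp h4 with h | h
      · exact absurd h (ne_of_gt hpi)
      · linarith
    have h6 : (p : ℤ) = n * q := by exact_mod_cast h5
    have hdvd : (q : ℤ) ∣ (p : ℤ) := ⟨n, by linarith [h6]⟩
    have hdvd' : q ∣ p := Int.ofNat_dvd.mp hdvd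
    have h7 : q ∣ 1 := hpq ▸ Nat.dvd_gcd hdvd' dvd_rfl
    have := Nat.le_of_dvd one_pos h7
    omega
  -- geometric sum is zero
  have hgeom : ∑ j ∈ Finset.range q, e ^ j = 0 := by
    rw [geom_sum_eq hne1, heq]
    simp
  have hsum0 : ∑ k ∈ Finset.range q, e ^ (q - k) = 0 := by
    have h1 : ∑ k ∈ Finset.range q, e ^ (q - (q - 1 - k)) = ∑ k ∈ Finset.range q, e ^ (q - k) :=
      Finset.sum_range_reflect (fun k => e ^ (q - k)) q
    have h2 : ∀ k ∈ Finset.range q, e ^ (q - (q - 1 - k)) = e * e ^ k := by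
      intro k hk
      have hk' : k < q := Finset.mem_range.mp hk
      have : q - (q - 1 - k) = k + 1 := by omega
      rw [this, pow_succ]; ring
    rw [← h1, Finset.sum_congr rfl h2, ← Finset.mul_sum, hgeom, mul_zero]
  -- main formula
  have hmain : T^[q] z = z + ∑ k ∈ Finset.range q, (ε' k : ℂ) * e ^ (q - k) := by
    rw [hiter q, heq, one_mul]
    have : ∑ k ∈ Finset.range q, e ^ (q - k) * (σ + ε' k)
        = (σ : ℂ) * (∑ k ∈ Finset.range q, e ^ (q - k))
          + ∑ k ∈ Finset.range q, (ε' k : ℂ) * e ^ (q - k) := by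
      rw [Finset.mul_sum, ← Finset.sum_add_distrib]
      refine Finset.sum_congr rfl fun k hk => ?_
      ring
    rw [this, hsum0, mul_zero, zero_add]
  have hexp : ∀ k : Fin q, Complex.exp (((q - k.val : ℕ) : ℂ) * (α : ℂ) * Complex.I)
      = e ^ (q - k.val) := by
    intro k
    rw [mul_assoc, Complex.exp_nat_mul]
  refine ⟨⟨fun k => ε' k, fun k => hsign k, ?_⟩, ?_⟩
  · rw [hmain]
    congr 1
    rw [← Fin.sum_univ_eq_sum_range (fun k => (ε' k : ℂ) * e ^ (q - k))]
    exact Finset.sum_congr rfl fun k _ => by rw [hexp k]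
  · rw [hmain]
    simp only [add_sub_cancel_left]
    calc ‖∑ k ∈ Finset.range q, (ε' k : ℂ) * e ^ (q - k)‖
        ≤ ∑ k ∈ Finset.range q, ‖(ε' k : ℂ) * e ^ (q - k)‖ := by
          exact norm_sum_le _ _
      _ = ∑ k ∈ Finset.range q, 1 := by
          refine Finset.sum_congr rfl fun k _ => ?_
          rw [norm_mul, norm_pow, Complex.norm_exp_ofReal_mul_I]
          rcases hsign k with h | h <;> simp [h]
      _ = q := by simp
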